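/- Assume f is μ-strongly convex with respect to the Hilbert norm on lin(A), i.e. f(y) ≥ f(x) + ⟨∇f(x), y − x⟩ + (μ/2)‖y − x‖² for all x, y ∈ lin(A), with μ > 0. Let m > 0 be a lower bound on the minimal directional width of A: sup_{z∈A} ⟨d, z⟩ ≥ m·‖d‖ for every nonzero d ∈ lin(A). Then f is (m²·μ)-strongly convex with respect to the atomic norm on lin(A): f(y) ≥ f(x) + ⟨∇f(x), y − x⟩ + (m²·μ/2)‖y − x‖_A² for all x, y ∈ lin(A). -/

import Mathlib

open Submodule Set Pointwise RealInnerProductSpace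

theorem aux_gauge_bound {H : Type*} [NormedAddCommGroup H] [InnerProductSpace ℝ H]
    [CompleteSpace H]
    (A : Set H) (hA : IsCompact A) (hsym : ∀ z ∈ A, -z ∈ A)
    {m : ℝ} (hm : 0 < m)
    (hmdw : ∀ d ∈ span ℝ A, d ≠ 0 → m * ‖d‖ ≤ sSup ((fun z => ⟪d, z⟫) '' A)) :
    ∀ d ∈ span ℝ A, m * gauge (convexHull ℝ A) d ≤ ‖d‖ := by
  intro d hd
  rcases eq_or_ne d 0 with rfl | hd0
  · simp [gauge_zero]
  -- A is nonempty
  have hAne : A.Nonempty := by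
    rcases A.eq_empty_or_nonempty with h | h
    · subst h; simp [Submodule.span_empty, Submodule.mem_bot] at hd; exact absurd hd hd0
    · exact h
  obtain ⟨z0, hz0⟩ := hAne
  -- bound on A
  obtain ⟨R0, hR0⟩ := hA.isBounded.exists_norm_le
  set R : ℝ := max R0 0 with hRdef
  have hRnn : 0 ≤ R := le_max_right _ _
  have hR : ∀ z ∈ A, ‖z‖ ≤ R := fun z hz => (hR0 z hz).trans (le_max_left _ _)
  set S : H → ℝ := fun u => sSup ((fun z => ⟪u, z⟫) '' A) with hSdef
  have hbdd : ∀ u : H, BddAbove ((fun z => ⟪u, z⟫) '' A) := by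
    intro u
    refine ⟨‖u‖ * R, ?_⟩
    rintro _ ⟨z, hz, rfl⟩
    exact (real_inner_le_norm u z).trans
      (mul_le_mul_of_nonneg_left (hR z hz) (norm_nonneg u))
  have hSle : ∀ u : H, ∀ b : ℝ, (∀ z ∈ A, ⟪u, z⟫ ≤ b) → S u ≤ b := by
    intro u b hb
    exact csSup_le ⟨_, ⟨z0, hz0, rfl⟩⟩ (by rintro _ ⟨z, hz, rfl⟩; exact hb z hz)
  have hleS : ∀ u : H, ∀ z ∈ A, ⟪u, z⟫ ≤ S u := by
    intro u z hz
    exact le_csSup (hbdd u) ⟨z, hz, rfl⟩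
  have hS0 : ∀ u : H, 0 ≤ S u := by
    intro u
    have h1 := hleS u z0 hz0
    have h2 := hleS u (-z0) (hsym z0 hz0)
    rw [inner_neg_right] at h2
    linarith
  -- extension of the width bound to the closure of the span
  have hmdw' : ∀ u ∈ closure ((span ℝ A : Submodule ℝ H) : Set H), m * ‖u‖ ≤ S u := by
    intro u hu
    refine le_of_forall_pos_le_add ?_
    intro ε hε
    set δ : ℝ := ε / (m + R + 1) with hδdef
    have hδ : 0 < δ := div_pos hε (by linarith)
    obtain ⟨u', hu', huu'⟩ := Metric.mem_closure_iff.1 hu δ hδ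
    rw [dist_eq_norm] at huu'
    have hnn : ‖u‖ ≤ ‖u'‖ + δ := by
      have := norm_sub_norm_le u u'
      linarith [this]
    have hSu' : ∀ z ∈ A, ⟪u', z⟫ ≤ S u + δ * R := by
      intro z hz
      have h1 : ⟪u', z⟫ = ⟪u, z⟫ + ⟪u' - u, z⟫ := by
        rw [← inner_add_left]
        congr 1
        abel
      have h2 : ⟪u' - u, z⟫ ≤ ‖u' - u‖ * ‖z‖ := real_inner_le_norm _ _
      have h3 : ‖u' - u‖ * ‖z‖ ≤ δ * R := by
        apply _root_.mul_le_mul (by rw [norm_sub_rev]; exact huu'.le) (hR z hz) (norm_nonneg z) hδ.le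
      have h4 := hleS u z hz
      linarith
    have hbound : m * ‖u'‖ ≤ S u + δ * R := by
      rcases eq_or_ne u' 0 with rfl | hu'0
      · simpa using by nlinarith [hS0 u, mul_nonneg hδ.le hRnn]
      · exact (hmdw u' hu' hu'0).trans (hSle u' _ hSu')
    have hfin : δ * (m + R) ≤ ε := by
      rw [hδdef]
      rw [div_mul_eq_mul_div, div_le_iff₀ (by linarith : (0:ℝ) < m + R + 1)]
      nlinarith
    nlinarith
  -- the compact closed convex hull
  set K : Set H := closure (convexHull ℝ A) with hKdef
  have hKconv : Convex ℝ K := (convex_convexHull ℝ A).closure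
  have hKcl : IsClosed K := isClosed_closure
  have hKcompact : IsCompact K :=
    TotallyBounded.isCompact_of_isClosed
      ((totallyBounded_convexHull.2 hA.totallyBounded).closure) hKcl
  -- the ball of the closed span is inside K
  have hball : ∀ w ∈ closure ((span ℝ A : Submodule ℝ H) : Set H), ‖w‖ ≤ m → w ∈ K := by
    intro w hw hwm
    by_contra hwK
    obtain ⟨l, u, hlK, hul⟩ := geometric_hahn_banach_closed_point hKconv hKcl hwK
    set W' := (span ℝ A).topologicalClosure with hW'def
    have hW'coe : (W' : Set H) = closure ((span ℝ A : Submodule ℝ H) : Set H) :=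
      Submodule.topologicalClosure_coe _
    haveI : CompleteSpace W' := by
      apply IsClosed.completeSpace_coe (hs := ?_)
      rw [hW'def]
      exact Submodule.isClosed_topologicalClosure _
    set v : H := (InnerProductSpace.toDual ℝ H).symm l with hvdef
    set p : H := (orthogonalProjection W' v : H) with hpdef
    have hp_eq : ∀ a ∈ W', ⟪p, a⟫ = l a := by
      intro a ha
      have h1 : ⟪v, a⟫ = l a := InnerProductSpace.toDual_symm_apply
      have h2 : ⟪a, v - p⟫ = 0 :=
        (Submodule.mem_orthogonal _ _).1 (sub_starProjection_mem_orthogonal (K := W') v)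
          a ha
      rw [real_inner_comm] at h2
      rw [inner_sub_left] at h2
      linarith
    have hwW : w ∈ W' := by rw [← SetLike.mem_coe, hW'coe]; exact hw
    have hz : ∀ z ∈ A, ⟪p, z⟫ < u := by
      intro z hz
      have hzW : z ∈ W' := Submodule.le_topologicalClosure _ (subset_span hz)
      rw [hp_eq z hzW]
      exact hlK z (subset_closure (subset_convexHull ℝ A hz))
    have h1 : S p ≤ u := hSle p u fun z hz' => (hz z hz').le
    have h2 : m * ‖p‖ ≤ S p := by
      apply hmdw'
      rw [← hW'coe]
      exact (orthogonalProjection W' v).2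
    have h3 : u < ⟪p, w⟫ := by rw [hp_eq w hwW]; exact hul
    have h4 : ⟪p, w⟫ ≤ ‖p‖ * ‖w‖ := real_inner_le_norm _ _
    have h5 : ‖p‖ * ‖w‖ ≤ ‖p‖ * m := mul_le_mul_of_nonneg_left hwm (norm_nonneg p)
    nlinarith
  -- finite dimensionality
  have hBcompact : IsCompact
      (closure ((span ℝ A : Submodule ℝ H) : Set H) ∩ Metric.closedBall (0 : H) m) := by
    apply hKcompact.of_isClosed_subset (isClosed_closure.inter Metric.isClosed_closedBall)
    rintro w ⟨hw1, hw2⟩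
    exact hball w hw1 (by simpa [Metric.mem_closedBall, dist_zero_right] using hw2)
  haveI hfdW : FiniteDimensional ℝ ((span ℝ A).topologicalClosure) := by
    apply FiniteDimensional.of_isCompact_closedBall₀ ℝ hm
    rw [Subtype.isCompact_iff]
    convert hBcompact using 1
    ext x
    simp only [Set.mem_image, Metric.mem_closedBall, dist_zero_right, Set.mem_inter_iff]
    constructor
    · rintro ⟨w, hw, rfl⟩
      refine ⟨?_, by simpa [Submodule.coe_norm] using hw⟩
      rw [← Submodule.topologicalClosure_coe]
      exact w.2
    · rintro ⟨hx1, hx2⟩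
      rw [← Submodule.topologicalClosure_coe] at hx1
      exact ⟨⟨x, hx1⟩, by simpa [Submodule.coe_norm] using hx2, rfl⟩
  haveI hfd : FiniteDimensional ℝ (span ℝ A) :=
    Submodule.finiteDimensional_of_le (Submodule.le_topologicalClosure _)
  have hclosed : IsClosed ((span ℝ A : Submodule ℝ H) : Set H) :=
    Submodule.closed_of_finiteDimensional _
  have hcl_eq : closure ((span ℝ A : Submodule ℝ H) : Set H)
      = ((span ℝ A : Submodule ℝ H) : Set H) := hclosed.closure_eq
  -- move to the subspace V
  set V : Submodule ℝ H := span ℝ A with hVdef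
  set A' : Set V := (Subtype.val) ⁻¹' A with hA'def
  have hAsub : A ⊆ (V : Set H) := subset_span
  have hA'img : (Subtype.val : V → H) '' A' = A := by
    ext x
    constructor
    · rintro ⟨w, hw, rfl⟩; exact hw
    · intro hx; exact ⟨⟨x, hAsub hx⟩, hx, rfl⟩
  have hC'img : (Subtype.val : V → H) '' (convexHull ℝ A') = convexHull ℝ A := by
    have h := V.subtype.image_convexHull A'
    have h2 : (⇑V.subtype) '' A' = A := hA'img
    rw [h2] at h
    exact h
  -- span of A' is everything in V
  have hspanA' : span ℝ A' = (⊤ : Submodule ℝ V) := by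
    apply Submodule.map_injective_of_injective
      (show Function.Injective V.subtype from Subtype.coe_injective)
    rw [Submodule.map_span, Submodule.map_subtype_top]
    have h2 : (⇑V.subtype) '' A' = A := hA'img
    rw [h2]
  -- 0 ∈ convexHull A'
  have hz0' : (⟨z0, hAsub hz0⟩ : V) ∈ A' := by simpa [hA'def] using hz0
  have hz0'' : (-⟨z0, hAsub hz0⟩ : V) ∈ A' := by
    simpa [hA'def] using hsym z0 hz0
  have h0C' : (0 : V) ∈ convexHull ℝ A' := by
    have := (convex_convexHull ℝ A') (subset_convexHull ℝ A' hz0')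
      (subset_convexHull ℝ A' hz0'') (by norm_num : (0:ℝ) ≤ 1/2)
      (by norm_num : (0:ℝ) ≤ 1/2) (by norm_num)
    simpa [smul_neg] using this
  -- affine span is top
  have haff : affineSpan ℝ (convexHull ℝ A' : Set V) = ⊤ := by
    rw [AffineSubspace.affineSpan_eq_top_iff_vectorSpan_eq_top_of_nonempty ℝ V V ⟨0, h0C'⟩]
    rw [vectorSpan_eq_span_vsub_set_right ℝ h0C']
    rw [eq_top_iff, ← hspanA']
    apply Submodule.span_le.2
    intro a ha
    apply Submodule.subset_span
    exact ⟨a, subset_convexHull ℝ A' ha, by simp⟩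
  -- nonempty interior
  obtain ⟨yI, hyI⟩ : (interior (convexHull ℝ A')).Nonempty := by
    rw [Convex.interior_nonempty_iff_affineSpan_eq_top (convex_convexHull ℝ A')]
    exact haff
  -- closure of C' in V pulls back from K
  have hclV : ∀ w : V, ‖w‖ ≤ m → w ∈ closure (convexHull ℝ A') := by
    intro w hw
    have hw1 : (w : H) ∈ K := by
      apply hball
      · rw [hcl_eq]; exact w.2
      · simpa [Submodule.coe_norm] using hw
    have hemb : Topology.IsClosedEmbedding (Subtype.val : V → H) :=
      hclosed.isClosedEmbedding_subtypeVal
    have himg : (Subtype.val : V → H) '' closure (convexHull ℝ A') = K := by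
      rw [← hemb.closure_image_eq, hC'img]
    rw [← himg] at hw1
    obtain ⟨w', hw', hww'⟩ := hw1
    rwa [show w' = w from Subtype.coe_injective hww'] at hw'
  -- open ball is inside C'
  have hmemC' : ∀ w : V, ‖w‖ < m → w ∈ convexHull ℝ A' := by
    intro w hw
    set t : ℝ := (m - ‖w‖) / (m + ‖yI‖ + 1) with htdef
    have hden : (0:ℝ) < m + ‖yI‖ + 1 := by positivity
    have ht0 : 0 < t := div_pos (by linarith) hden
    have htmul : t * (m + ‖yI‖ + 1) = m - ‖w‖ := by
      rw [htdef, div_mul_cancel₀]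
      exact hden.ne'
    have ht1 : t < 1 := by nlinarith [norm_nonneg w, norm_nonneg yI]
    have h1t : (0:ℝ) < 1 - t := by linarith
    set x : V := (1 - t)⁻¹ • (w - t • yI) with hxdef
    have hxn : ‖x‖ ≤ m := by
      have h1 : ‖x‖ ≤ (1 - t)⁻¹ * (‖w‖ + t * ‖yI‖) := by
        rw [hxdef, norm_smul, Real.norm_eq_abs, abs_of_pos (inv_pos.2 h1t)]
        apply mul_le_mul_of_nonneg_left _ (inv_pos.2 h1t).le
        calc ‖w - t • yI‖ ≤ ‖w‖ + ‖t • yI‖ := norm_sub_le _ _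
          _ = ‖w‖ + t * ‖yI‖ := by rw [norm_smul, Real.norm_eq_abs, abs_of_pos ht0]
      have h2 : (1 - t)⁻¹ * (‖w‖ + t * ‖yI‖) ≤ m := by
        rw [inv_mul_le_iff₀ h1t]
        nlinarith [norm_nonneg w, norm_nonneg yI]
      linarith
    have hxcl : x ∈ closure (convexHull ℝ A') := hclV x hxn
    have hcombo := (convex_convexHull ℝ A').combo_closure_interior_mem_interior hxcl hyI
      (by linarith : (0:ℝ) ≤ 1 - t) ht0 (by ring)
    have heq : (1 - t) • x + t • yI = w := by
      rw [hxdef, smul_inv_smul₀ h1t.ne']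
      abel
    rw [heq] at hcombo
    exact interior_subset hcombo
  -- conclude the gauge bound
  have hgauge : gauge (convexHull ℝ A) d ≤ ‖d‖ / m := by
    apply le_of_forall_gt_imp_ge_of_dense
    intro c hc
    have hc0 : 0 < c := lt_of_le_of_lt (div_nonneg (norm_nonneg d) hm.le) hc
    set w : V := c⁻¹ • (⟨d, hd⟩ : V) with hwdef
    have hwn : ‖w‖ < m := by
      have : ‖w‖ = c⁻¹ * ‖d‖ := by
        rw [hwdef, norm_smul, Real.norm_eq_abs, abs_of_pos (inv_pos.2 hc0)]
        congr 1
      rw [this, inv_mul_eq_div, div_lt_iff₀ hc0]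
      rw [div_lt_iff₀ hm] at hc
      linarith [mul_comm m c]
    have hwC : (w : H) ∈ convexHull ℝ A := by
      rw [← hC'img]
      exact ⟨w, hmemC' w hwn, rfl⟩
    have hdc : d ∈ c • convexHull ℝ A := by
      refine ⟨(w : H), hwC, ?_⟩
      show c • ((w : H)) = d
      rw [hwdef]
      push_cast
      rw [smul_inv_smul₀ hc0.ne']
    exact gauge_le_of_mem hc0.le hdc
  calc m * gauge (convexHull ℝ A) d = gauge (convexHull ℝ A) d * m := mul_comm _ _
    _ ≤ ‖d‖ := (le_div_iff₀ hm).1 hgauge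


/-- Lemma 6 of the paper: if `f` is `μ`-strongly convex w.r.t. the
Hilbert norm on `lin(A)` and `m > 0` lower bounds the minimal directional width of
`A`, then `f` is `m² μ`-strongly convex w.r.t. the atomic norm on `lin(A)`. -/
theorem stmt_5 {H : Type*} [NormedAddCommGroup H] [InnerProductSpace ℝ H] [CompleteSpace H]
    (A : Set H) (hA : IsCompact A) (hsym : ∀ z ∈ A, -z ∈ A)
    (f : H → ℝ) (f' : H → H) (hgrad : ∀ x, HasGradientAt f (f' x) x)
    (hconv : ConvexOn ℝ univ f)
    (habs : ∀ x ∈ span ℝ A, ∃ c : ℝ, 0 < c ∧ x ∈ c • convexHull ℝ A)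
    (hpos : ∀ x ∈ span ℝ A, x ≠ 0 → 0 < gauge (convexHull ℝ A) x)
    (μ m : ℝ) (hμ : 0 < μ) (hm : 0 < m)
    (hstrong : ∀ x ∈ span ℝ A, ∀ y ∈ span ℝ A,
      f x + ⟪f' x, y - x⟫ + μ / 2 * ‖y - x‖ ^ 2 ≤ f y)
    (hmdw : ∀ d ∈ span ℝ A, d ≠ 0 → m * ‖d‖ ≤ sSup ((fun z => ⟪d, z⟫) '' A)) :
    ∀ x ∈ span ℝ A, ∀ y ∈ span ℝ A,
      f x + ⟪f' x, y - x⟫ + m ^ 2 * μ / 2 * gauge (convexHull ℝ A) (y - x) ^ 2 ≤ f y := by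
  intro x hx y hy
  have hd : y - x ∈ span ℝ A := sub_mem hy hx
  have key : m * gauge (convexHull ℝ A) (y - x) ≤ ‖y - x‖ :=
    aux_gauge_bound A hA hsym hm hmdw (y - x) hd
  have hg : 0 ≤ gauge (convexHull ℝ A) (y - x) := gauge_nonneg _
  have hsq : (m * gauge (convexHull ℝ A) (y - x)) ^ 2 ≤ ‖y - x‖ ^ 2 := by
    have hmg : 0 ≤ m * gauge (convexHull ℝ A) (y - x) := mul_nonneg hm.le hg
    nlinarith
  have hmain := hstrong x hx y hy
  nlinarith [mul_le_mul_of_nonneg_left hsq (by positivity : (0:ℝ) ≤ μ / 2)]
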